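/- arXiv:1611.07393 — 3 statements merged into one kernel-verified Lean document; each statement's English description precedes it below -/
import Mathlib

section
/- Let N ∈ ℕ, m ∈ ℕ, and let B_0 = {y ∈ ℝ^m : ‖y‖ ≤ 2B} be a closed ball for some B > 0. Define the bounded consensus set C̃ = {y = (y_1,...,y_N) ∈ (ℝ^m)^N : ∃ ȳ ∈ B_0 such that y_i = ȳ for all i}. Then for any y ∈ (ℝ^m)^N, the Euclidean projection of y onto C̃ is given componentwise by P_{C̃}(y)_i = P_{B_0}( (1/N) ∑_{j=1}^N y_j ) for each i. -/
/-- Euclidean projection onto the closed ball of radius `ρ` centered at the origin. -/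
noncomputable def projBall {E : Type*} [NormedAddCommGroup E] [NormedSpace ℝ E]
    (ρ : ℝ) (v : E) : E :=
  if ‖v‖ ≤ ρ then v else (ρ / ‖v‖) • v

lemma projBall_norm_le {E : Type*} [NormedAddCommGroup E] [NormedSpace ℝ E]
    {ρ : ℝ} (hρ : 0 ≤ ρ) (v : E) : ‖projBall ρ v‖ ≤ ρ := by
  unfold projBall
  split_ifs with h
  · exact h
  · push_neg at h
    have hv : 0 < ‖v‖ := lt_of_le_of_lt hρ h
    rw [norm_smul, Real.norm_of_nonneg (div_nonneg hρ hv.le), div_mul_cancel₀ _ hv.ne']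

lemma projBall_dist_le {E : Type*} [NormedAddCommGroup E] [NormedSpace ℝ E]
    {ρ : ℝ} (v w : E) (hw : ‖w‖ ≤ ρ) : ‖v - projBall ρ v‖ ≤ ‖v - w‖ := by
  unfold projBall
  split_ifs with h
  · simp
  · push_neg at h
    have hv : 0 < ‖v‖ := (norm_nonneg w).trans_lt (hw.trans_lt h)
    have h1 : v - (ρ / ‖v‖) • v = (1 - ρ / ‖v‖) • v := by
      rw [sub_smul, one_smul]
    have h2 : ρ / ‖v‖ ≤ 1 := (div_le_one hv).mpr h.le
    rw [h1, norm_smul, Real.norm_of_nonneg (by linarith), sub_mul, one_mul,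
      div_mul_cancel₀ _ hv.ne']
    calc ‖v‖ - ρ ≤ ‖v‖ - ‖w‖ := by linarith
      _ ≤ ‖v - w‖ := norm_sub_norm_le v w

/-- the Euclidean projection of `y = (y_1,…,y_N)` onto the bounded
consensus set `C̃ = {(ȳ,…,ȳ) : ‖ȳ‖ ≤ 2B}` is given componentwise by the projection
of the average `(1/N) ∑ⱼ yⱼ` onto the ball `B₀` of radius `2B`. -/
theorem stmt5 {m N : ℕ} (hN : 0 < N) (B : ℝ) (hB : 0 < B)
    (Ctil : Set (PiLp 2 (fun _ : Fin N => EuclideanSpace ℝ (Fin m))))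
    (hCtil : Ctil = {v | ∃ ybar : EuclideanSpace ℝ (Fin m),
        ‖ybar‖ ≤ 2 * B ∧ ∀ i, v i = ybar})
    (y z : PiLp 2 (fun _ : Fin N => EuclideanSpace ℝ (Fin m)))
    (hz : ∀ i, z i = projBall (2 * B) ((N : ℝ)⁻¹ • ∑ j, y j)) :
    z ∈ Ctil ∧ ∀ u ∈ Ctil, ‖y - z‖ ≤ ‖y - u‖ := by
  set a : EuclideanSpace ℝ (Fin m) := (N : ℝ)⁻¹ • ∑ j, y j with ha
  have hNne : (N : ℝ) ≠ 0 := Nat.cast_ne_zero.mpr hN.ne'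
  have hsum0 : ∑ i : Fin N, (y i - a) = 0 := by
    rw [Finset.sum_sub_distrib, Finset.sum_const, Finset.card_univ, Fintype.card_fin,
      ha, ← Nat.cast_smul_eq_nsmul ℝ, smul_inv_smul₀ hNne, sub_self]
  -- key: squared distance to a constant vector decomposes
  have key : ∀ c : EuclideanSpace ℝ (Fin m),
      ∑ i : Fin N, ‖y i - c‖ ^ 2 =
        (∑ i : Fin N, ‖y i - a‖ ^ 2) + (N : ℝ) * ‖a - c‖ ^ 2 := by
    intro c
    have expand : ∀ i : Fin N, ‖y i - c‖ ^ 2 =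
        ‖y i - a‖ ^ 2 + 2 * inner ℝ (y i - a) (a - c) + ‖a - c‖ ^ 2 := by
      intro i
      have : y i - c = (y i - a) + (a - c) := by abel
      rw [this, @norm_add_sq_real]
    simp_rw [expand]
    rw [Finset.sum_add_distrib, Finset.sum_add_distrib, ← Finset.mul_sum,
      ← sum_inner, hsum0]
    simp [Finset.card_univ, mul_comm]
  have hzconst : ∀ i, z i = projBall (2 * B) a := hz
  refine ⟨?_, ?_⟩
  · rw [hCtil]
    exact ⟨projBall (2 * B) a, projBall_norm_le (by linarith) a, hzconst⟩
  · intro u hu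
    rw [hCtil] at hu
    obtain ⟨c, hc, huc⟩ := hu
    have hd : ‖a - projBall (2 * B) a‖ ≤ ‖a - c‖ := projBall_dist_le a c hc
    have h1 : ‖y - z‖ ^ 2 = (∑ i : Fin N, ‖y i - a‖ ^ 2)
        + (N : ℝ) * ‖a - projBall (2 * B) a‖ ^ 2 := by
      rw [PiLp.norm_sq_eq_of_L2, ← key]
      exact Finset.sum_congr rfl fun i _ => by rw [PiLp.sub_apply, hzconst i]
    have h2 : ‖y - u‖ ^ 2 = (∑ i : Fin N, ‖y i - a‖ ^ 2)
        + (N : ℝ) * ‖a - c‖ ^ 2 := by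
      rw [PiLp.norm_sq_eq_of_L2, ← key]
      exact Finset.sum_congr rfl fun i _ => by rw [PiLp.sub_apply, huc i]
    have hsq : ‖y - z‖ ^ 2 ≤ ‖y - u‖ ^ 2 := by
      rw [h1, h2]
      have hsq' : ‖a - projBall (2 * B) a‖ ^ 2 ≤ ‖a - c‖ ^ 2 :=
        pow_le_pow_left₀ (norm_nonneg _) hd 2
      have := mul_le_mul_of_nonneg_left hsq' (Nat.cast_nonneg (α := ℝ) N)
      linarith
    nlinarith [norm_nonneg (y - z), norm_nonneg (y - u)]
end

section
/- Let τ_i, κ_i, γ > 0 and L_i ≥ 0 for i = 1,...,N, and R_i ∈ ℝ^{m×n_i}. Suppose τ_i < 1/L_i, κ_i < 1/γ, and (1/τ_i − L_i)(1/κ_i − γ) > ‖R_i‖² for all i, where ‖R_i‖ is the spectral norm. Then the symmetric block matrix Q̄ = [[D, −Tᵀ],[−T, D_κ]] is positive definite, where D = diag(D̄_τ, D_γ), D̄_τ = diag((1/τ_i − L_i) I_{n_i}), D_γ = (1/γ) I_{mN}, D_κ = diag((1/κ_i) I_m), and T = [R, −I_{mN}] with R = diag(R_1,...,R_N). If the strict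 inequality is relaxed to ≥ for some i, then Q̄ is positive semidefinite. -/
lemma aux_key (a b g r x W z : ℝ) (ha : 0 < a) (hg : 0 < g) :
    a*g*(a*x^2 + (1/g)*W^2 + ((b+g))*z^2 - 2*((r*x + W)*z))
      = g*(a*x - r*z)^2 + g*(a*b - r^2)*z^2 + a*(W - g*z)^2 := by
  field_simp
  ring

lemma aux_nonneg (a b g r x W z : ℝ) (ha : 0 < a) (hb : 0 < b) (hg : 0 < g)
    (hrab : r^2 ≤ a*b) :
    0 ≤ a*x^2 + (1/g)*W^2 + (b+g)*z^2 - 2*((r*x + W)*z) := by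
  have h1 : 0 ≤ g*(a*x - r*z)^2 + g*(a*b - r^2)*z^2 + a*(W - g*z)^2 := by
    have := mul_nonneg hg.le (sq_nonneg (a*x - r*z))
    have := mul_nonneg (mul_nonneg hg.le (by linarith : (0:ℝ) ≤ a*b - r^2)) (sq_nonneg z)
    have := mul_nonneg ha.le (sq_nonneg (W - g*z))
    linarith
  have h2 := aux_key a b g r x W z ha hg
  nlinarith [mul_pos ha hg]

lemma aux_pos (a b g r x W z : ℝ) (ha : 0 < a) (hb : 0 < b) (hg : 0 < g)
    (hx : 0 ≤ x) (hW : 0 ≤ W) (hz : 0 ≤ z)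
    (hrab : r^2 < a*b) (hne : 0 < x ∨ 0 < W ∨ 0 < z) :
    0 < a*x^2 + (1/g)*W^2 + (b+g)*z^2 - 2*((r*x + W)*z) := by
  have h2 := aux_key a b g r x W z ha hg
  rcases eq_or_lt_of_le hz with hz0 | hz0
  · subst hz0
    rcases hne with h | h | h
    · nlinarith [mul_pos ha (mul_pos h h), mul_nonneg (mul_nonneg (one_div_pos.2 hg).le hW) hW]
    · nlinarith [mul_pos (one_div_pos.2 hg) (mul_pos h h), mul_nonneg (mul_nonneg ha.le hx) hx]
    · exact absurd h (by linarith)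
  · have h1 : 0 < g*(a*x - r*z)^2 + g*(a*b - r^2)*z^2 + a*(W - g*z)^2 := by
      have := mul_nonneg hg.le (sq_nonneg (a*x - r*z))
      have := mul_pos (mul_pos hg (by linarith : (0:ℝ) < a*b - r^2)) (mul_pos hz0 hz0)
      have := mul_nonneg ha.le (sq_nonneg (W - g*z))
      nlinarith
    nlinarith [mul_pos ha hg]

lemma term_bound {p q : ℕ} (A : EuclideanSpace ℝ (Fin p) →L[ℝ] EuclideanSpace ℝ (Fin q))
    (ξ : EuclideanSpace ℝ (Fin p)) (w y : EuclideanSpace ℝ (Fin q)) :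
    (inner ℝ (A ξ - w) y : ℝ) ≤ (‖A‖*‖ξ‖ + ‖w‖)*‖y‖ := by
  calc (inner ℝ (A ξ - w) y : ℝ) ≤ ‖A ξ - w‖ * ‖y‖ := real_inner_le_norm _ _
    _ ≤ (‖A‖*‖ξ‖ + ‖w‖)*‖y‖ := by
        apply mul_le_mul_of_nonneg_right _ (norm_nonneg _)
        calc ‖A ξ - w‖ ≤ ‖A ξ‖ + ‖w‖ := norm_sub_le _ _
          _ ≤ ‖A‖*‖ξ‖ + ‖w‖ := by gcongr; exact A.le_opNorm _

/-- positive (semi)definiteness of the matrix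
`Q̄ = [[D, −Tᵀ],[−T, D_κ]]` with `D = diag(D̄_τ, D_γ)`, `D̄_τ = diag((1/τᵢ−Lᵢ)I)`,
`D_γ = (1/γ)I`, `D_κ = diag((1/κᵢ)I)`, `T = [R, −I]`, `R = diag(R₁,…,R_N)`,
expressed via the quadratic form
`z ↦ ∑ᵢ(1/τᵢ−Lᵢ)‖ξᵢ‖² + (1/γ)∑ᵢ‖wᵢ‖² + ∑ᵢ(1/κᵢ)‖yᵢ‖² − 2∑ᵢ⟨Rᵢξᵢ − wᵢ, yᵢ⟩`
for `z = (ξ, w, y)`: strict step-size inequalities give positive definiteness,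
and the relaxed inequalities give positive semidefiniteness. -/
theorem stmt9 (N m : ℕ) (n : Fin N → ℕ) (τ κ L : Fin N → ℝ) (γ : ℝ)
    (hτ : ∀ i, 0 < τ i) (hκ : ∀ i, 0 < κ i) (hγ : 0 < γ) (hL : ∀ i, 0 ≤ L i)
    (hτL : ∀ i, τ i * L i < 1) (hκγ : ∀ i, κ i * γ < 1)
    (R : ∀ i, EuclideanSpace ℝ (Fin (n i)) →L[ℝ] EuclideanSpace ℝ (Fin m)) :
    ((∀ i, ‖R i‖ ^ 2 < (1 / τ i - L i) * (1 / κ i - γ)) →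
      ∀ (ξ : ∀ i, EuclideanSpace ℝ (Fin (n i)))
        (w y : Fin N → EuclideanSpace ℝ (Fin m)),
        ¬ (ξ = 0 ∧ w = 0 ∧ y = 0) →
        0 < ∑ i, (1 / τ i - L i) * ‖ξ i‖ ^ 2 + (1 / γ) * ∑ i, ‖w i‖ ^ 2
            + ∑ i, (1 / κ i) * ‖y i‖ ^ 2
            - 2 * ∑ i, (inner ℝ (R i (ξ i) - w i) (y i) : ℝ)) ∧
    ((∀ i, ‖R i‖ ^ 2 ≤ (1 / τ i - L i) * (1 / κ i - γ)) →
      ∀ (ξ : ∀ i, EuclideanSpace ℝ (Fin (n i)))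
        (w y : Fin N → EuclideanSpace ℝ (Fin m)),
        0 ≤ ∑ i, (1 / τ i - L i) * ‖ξ i‖ ^ 2 + (1 / γ) * ∑ i, ‖w i‖ ^ 2
            + ∑ i, (1 / κ i) * ‖y i‖ ^ 2
            - 2 * ∑ i, (inner ℝ (R i (ξ i) - w i) (y i) : ℝ)) := by
  have ha : ∀ i, 0 < 1 / τ i - L i := by
    intro i
    rw [sub_pos, lt_div_iff₀ (hτ i)]
    linarith [hτL i]
  have hb : ∀ i, 0 < 1 / κ i - γ := by
    intro i
    rw [sub_pos, lt_div_iff₀ (hκ i)]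
    linarith [hκγ i]
  constructor
  · intro hR ξ w y hne
    rw [Finset.mul_sum, Finset.mul_sum, ← Finset.sum_add_distrib,
      ← Finset.sum_add_distrib, ← Finset.sum_sub_distrib]
    have hex : ∃ i, ξ i ≠ 0 ∨ w i ≠ 0 ∨ y i ≠ 0 := by
      by_contra h
      push_neg at h
      exact hne ⟨funext fun i => (h i).1, funext fun i => (h i).2.1,
        funext fun i => (h i).2.2⟩
    obtain ⟨i0, hi0⟩ := hex
    apply Finset.sum_pos'
    · intro i _
      have h1 := aux_nonneg (1 / τ i - L i) (1 / κ i - γ) γ ‖R i‖ ‖ξ i‖ ‖w i‖ ‖y i‖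
        (ha i) (hb i) hγ (hR i).le
      have h2 := term_bound (R i) (ξ i) (w i) (y i)
      linarith
    · refine ⟨i0, Finset.mem_univ _, ?_⟩
      have h1 := aux_pos (1 / τ i0 - L i0) (1 / κ i0 - γ) γ ‖R i0‖ ‖ξ i0‖ ‖w i0‖ ‖y i0‖
        (ha i0) (hb i0) hγ (norm_nonneg _) (norm_nonneg _) (norm_nonneg _) (hR i0) ?_
      · have h2 := term_bound (R i0) (ξ i0) (w i0) (y i0)
        linarith
      · rcases hi0 with h | h | h
        · exact Or.inl (norm_pos_iff.2 h)
        · exact Or.inr (Or.inl (norm_pos_iff.2 h))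
        · exact Or.inr (Or.inr (norm_pos_iff.2 h))
  · intro hR ξ w y
    rw [Finset.mul_sum, Finset.mul_sum, ← Finset.sum_add_distrib,
      ← Finset.sum_add_distrib, ← Finset.sum_sub_distrib]
    apply Finset.sum_nonneg
    intro i _
    have h1 := aux_nonneg (1 / τ i - L i) (1 / κ i - γ) γ ‖R i‖ ‖ξ i‖ ‖w i‖ ‖y i‖
      (ha i) (hb i) hγ (hR i)
    have h2 := term_bound (R i) (ξ i) (w i) (y i)
    linarith
end

section
/- Let φ: ℝ^n → ℝ ∪ {+∞}, g: ℝ^n → ℝ^m, K ⊆ ℝ^m a cone with nonempty interior, and define the dual function q(y) = inf_ξ φ(ξ) + yᵀ g(ξ) for y ∈ K° and q(y) = −∞ otherwise. Suppose ξ̄ satisfies g(ξ̄) ∈ int(K) and φ(ξ̄) < ∞. Let r > 0 be such that g(ξ̄) + r u ∈ K for all ‖u‖ ≤ 1. Then for any ȳ with q(ȳ) > −∞ and any y ∈ K° with q(y) ≥ q(ȳ), we have ‖y‖ ≤ (φ(ξ̄) − q(ȳ)) / r. -/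
/-- dual boundedness from a Slater point: with
`q(y) = inf_ξ (φ(ξ) + ⟨y, g(ξ)⟩)` on the polar cone `K°`, a Slater point `ξ̄` with
`g(ξ̄) + r·u ∈ K` for all `‖u‖ ≤ 1` (`r > 0`, `φ(ξ̄) < ∞`) yields, for any
`ȳ ∈ K°` with `q(ȳ) > −∞` and any `y ∈ K°` with `q(y) ≥ q(ȳ)`, the bound
`‖y‖ ≤ (φ(ξ̄) − q(ȳ))/r`, stated here as `r‖y‖ ≤ φ(ξ̄) − q(ȳ)` in `EReal`. -/
theorem stmt12 {n m : ℕ}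
    (φ : EuclideanSpace ℝ (Fin n) → EReal) (hφbot : ∀ ξ, φ ξ ≠ ⊥)
    (g : EuclideanSpace ℝ (Fin n) → EuclideanSpace ℝ (Fin m))
    (K : Set (EuclideanSpace ℝ (Fin m)))
    (hcone : ∀ c : ℝ, 0 < c → ∀ x ∈ K, c • x ∈ K)
    (q : EuclideanSpace ℝ (Fin m) → EReal)
    (hq : ∀ y, (∀ w ∈ K, (inner ℝ y w : ℝ) ≤ 0) →
        q y = ⨅ ξ, (φ ξ + (((inner ℝ y (g ξ) : ℝ)) : EReal)))
    (ξbar : EuclideanSpace ℝ (Fin n)) (hφfin : φ ξbar ≠ ⊤)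
    (r : ℝ) (hr : 0 < r)
    (hball : ∀ u : EuclideanSpace ℝ (Fin m), ‖u‖ ≤ 1 → g ξbar + r • u ∈ K)
    (ybar y : EuclideanSpace ℝ (Fin m))
    (hybar : ∀ w ∈ K, (inner ℝ ybar w : ℝ) ≤ 0) (hqbar : q ybar ≠ ⊥)
    (hy : ∀ w ∈ K, (inner ℝ y w : ℝ) ≤ 0) (hge : q ybar ≤ q y) :
    ((r * ‖y‖ : ℝ) : EReal) ≤ φ ξbar - q ybar := by
  -- key inner product bound: ⟨y, g ξ̄⟩ ≤ -(r‖y‖)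
  have h1 : (inner ℝ y (g ξbar) : ℝ) ≤ -(r * ‖y‖) := by
    by_cases hy0 : y = 0
    · simp [hy0]
    · have hu : ‖(‖y‖⁻¹ • y : EuclideanSpace ℝ (Fin m))‖ ≤ 1 := by
        rw [norm_smul, norm_inv, norm_norm, inv_mul_cancel₀ (norm_ne_zero_iff.2 hy0)]
      have hK := hy _ (hball _ hu)
      rw [inner_add_right, inner_smul_right, inner_smul_right,
        real_inner_self_eq_norm_sq] at hK
      have hny : (0:ℝ) < ‖y‖ := norm_pos_iff.2 hy0
      have : (inner ℝ y (g ξbar) : ℝ) + r * ‖y‖ ≤ 0 := by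
        have h : ‖y‖⁻¹ * (‖y‖ ^ 2) = ‖y‖ := by field_simp
        nlinarith [hK, h]
      linarith
  have h2 : q y ≤ φ ξbar + (((inner ℝ y (g ξbar) : ℝ)) : EReal) := by
    rw [hq y hy]; exact iInf_le _ ξbar
  lift φ ξbar to ℝ using ⟨hφfin, hφbot ξbar⟩ with c hc
  have h3 : q ybar ≤ ((c + -(r * ‖y‖) : ℝ) : EReal) := by
    refine le_trans hge (le_trans h2 ?_)
    rw [EReal.coe_add]
    exact add_le_add_right (EReal.coe_le_coe_iff.2 h1) _
  have hqtop : q ybar ≠ ⊤ := ne_top_of_le_ne_top (EReal.coe_ne_top _) h3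
  lift q ybar to ℝ using ⟨hqtop, hqbar⟩ with b hb
  rw [← EReal.coe_sub, EReal.coe_le_coe_iff]
  have := EReal.coe_le_coe_iff.1 h3
  linarith
end
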